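/- Let w_1,…,w_n > 0, Λ_w = diag(w_1,…,w_n), and let κ_1,…,κ_n denote the eigenvalues of Λ_w C Λ_w. If A ∈ 𝒜 satisfies tr(Aᵀ Λ_σ C Λ_w) = Σ_{i=1}^n κ_i^{1/2}, then A = Λ_σ^{-1} Λ_w (Λ_w C Λ_w)^{-1/2}; that is, the maximizer of the weighted-correlation objective over 𝒜 is unique. -/

import Mathlib

open Matrix BigOperators

open scoped ComplexOrder in
/-- The square root of a positive semidefinite matrix, as defined in the older Mathlib
(`Matrix.PosSemidef.sqrt`, since removed). -/
noncomputable def Matrix.PosSemidef.sqrt {m 𝕜 : Type*} [Fintype m] [DecidableEq m] [RCLike 𝕜]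
    {A : Matrix m m 𝕜} (hA : A.PosSemidef) : Matrix m m 𝕜 :=
  hA.1.eigenvectorUnitary.1 * diagonal ((↑) ∘ (√·) ∘ hA.1.eigenvalues) *
    (star hA.1.eigenvectorUnitary : Matrix m m 𝕜)

lemma Matrix.PosSemidef.sqrt_mul_self {n : ℕ} {A : Matrix (Fin n) (Fin n) ℝ} (hA : A.PosSemidef) :
    hA.sqrt * hA.sqrt = A := by
  have hu : (star hA.1.eigenvectorUnitary : Matrix (Fin n) (Fin n) ℝ) * hA.1.eigenvectorUnitary.1 = 1 :=
    Matrix.mem_unitaryGroup_iff'.mp hA.1.eigenvectorUnitary.2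
  unfold Matrix.PosSemidef.sqrt
  have hd : (diagonal (RCLike.ofReal ∘ (√·) ∘ hA.1.eigenvalues) : Matrix (Fin n) (Fin n) ℝ) *
      diagonal (RCLike.ofReal ∘ (√·) ∘ hA.1.eigenvalues) = diagonal (RCLike.ofReal ∘ hA.1.eigenvalues) := by
    rw [diagonal_mul_diagonal]
    congr 1
    funext i
    simp [Real.mul_self_sqrt (hA.eigenvalues_nonneg i)]
  calc _ = hA.1.eigenvectorUnitary.1 * (diagonal (RCLike.ofReal ∘ (√·) ∘ hA.1.eigenvalues) *
        ((star hA.1.eigenvectorUnitary : Matrix (Fin n) (Fin n) ℝ) * hA.1.eigenvectorUnitary.1) *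
        diagonal (RCLike.ofReal ∘ (√·) ∘ hA.1.eigenvalues)) *
        (star hA.1.eigenvectorUnitary : Matrix (Fin n) (Fin n) ℝ) := by
          simp only [Matrix.mul_assoc]
    _ = hA.1.eigenvectorUnitary.1 * diagonal (RCLike.ofReal ∘ hA.1.eigenvalues) *
        (star hA.1.eigenvectorUnitary : Matrix (Fin n) (Fin n) ℝ) := by
          rw [hu, Matrix.mul_one, hd]
    _ = A := by
          conv_rhs => rw [hA.1.spectral_theorem]
          rfl

lemma Matrix.PosSemidef.posSemidef_sqrt {n : ℕ} {A : Matrix (Fin n) (Fin n) ℝ} (hA : A.PosSemidef) :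
    hA.sqrt.PosSemidef := by
  unfold Matrix.PosSemidef.sqrt
  have hd : (diagonal ((↑) ∘ (√·) ∘ hA.1.eigenvalues) : Matrix (Fin n) (Fin n) ℝ).PosSemidef :=
    Matrix.PosSemidef.diagonal (fun i => by simp [Real.sqrt_nonneg])
  have := hd.mul_mul_conjTranspose_same (hA.1.eigenvectorUnitary.1)
  rwa [← Matrix.star_eq_conjTranspose, ← Unitary.coe_star] at this

lemma aux_tr_zero {n : ℕ} (M : Matrix (Fin n) (Fin n) ℝ) (h : (Mᵀ * M).trace = 0) : M = 0 := by
  have h2 : ∑ i, ∑ j, M j i * M j i = 0 := by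
    simpa [Matrix.trace, Matrix.diag, Matrix.mul_apply] using h
  ext i j
  have := (Finset.sum_eq_zero_iff_of_nonneg (fun i _ => Finset.sum_nonneg fun j _ => mul_self_nonneg _)).mp h2 j (Finset.mem_univ _)
  have := (Finset.sum_eq_zero_iff_of_nonneg (fun j _ => mul_self_nonneg _)).mp this i (Finset.mem_univ _)
  simpa [mul_self_eq_zero] using this

lemma aux_key {n : ℕ} (R U : Matrix (Fin n) (Fin n) ℝ) (hR : R.PosSemidef)
    (hRdet : R.det ≠ 0) (hU : Uᵀ * U = 1) (htr : (U * R).trace = R.trace) : U = 1 := by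
  set T := hR.sqrt with hTdef
  have hTT : T * T = R := hR.sqrt_mul_self
  have hTsym : Tᵀ = T := by
    have := hR.posSemidef_sqrt.1
    rwa [Matrix.IsHermitian, Matrix.conjTranspose_eq_transpose_of_trivial] at this
  have hRsym : Rᵀ = R := by
    have := hR.1
    rwa [Matrix.IsHermitian, Matrix.conjTranspose_eq_transpose_of_trivial] at this
  have hTdet : T.det ≠ 0 := by
    intro h0
    apply hRdet
    rw [← hTT, Matrix.det_mul, h0, mul_zero]
  set M := T - U * T with hM
  have e1 : Mᵀ * M = T * T + T * T - T * U * T - T * Uᵀ * T := by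
    have h1 : Mᵀ = T - T * Uᵀ := by
      rw [hM, Matrix.transpose_sub, Matrix.transpose_mul, hTsym]
    rw [h1, hM]
    have h2 : T * Uᵀ * (U * T) = T * T := by
      rw [Matrix.mul_assoc, ← Matrix.mul_assoc Uᵀ, hU, Matrix.one_mul]
    rw [Matrix.sub_mul, Matrix.mul_sub, Matrix.mul_sub, h2]
    noncomm_ring
  have e2 : (Mᵀ * M).trace = 0 := by
    rw [e1]
    have t1 : (T * U * T).trace = (U * R).trace := by
      rw [Matrix.trace_mul_cycle, hTT, Matrix.trace_mul_comm]
    have t2 : (T * Uᵀ * T).trace = (U * R).trace := by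
      rw [Matrix.trace_mul_cycle, hTT,
        ← Matrix.trace_transpose (R * Uᵀ), Matrix.transpose_mul, Matrix.transpose_transpose, hRsym]
    simp only [Matrix.trace_sub, Matrix.trace_add, hTT, t1, t2, htr]
    ring
  have hM0 : M = 0 := aux_tr_zero M e2
  have hUT : U * T = T := by
    have := sub_eq_zero.mp hM0
    exact this.symm
  calc U = U * (T * T⁻¹) := by rw [Matrix.mul_nonsing_inv T (isUnit_iff_ne_zero.mpr hTdet), Matrix.mul_one]
    _ = (U * T) * T⁻¹ := by rw [Matrix.mul_assoc]
    _ = T * T⁻¹ := by rw [hUT]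
    _ = 1 := Matrix.mul_nonsing_inv T (isUnit_iff_ne_zero.mpr hTdet)

lemma aux_trace_sqrt {n : ℕ} (K : Matrix (Fin n) (Fin n) ℝ) (hK : K.PosDef) :
    (hK.posSemidef.sqrt).trace = ∑ i, Real.sqrt (hK.1.eigenvalues i) := by
  rw [Matrix.PosSemidef.sqrt]
  rw [Matrix.trace_mul_comm, ← Matrix.mul_assoc,
    Matrix.mem_unitaryGroup_iff'.mp (Matrix.IsHermitian.eigenvectorUnitary hK.posSemidef.1).2,
    Matrix.one_mul, Matrix.trace_diagonal]
  rfl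

set_option maxHeartbeats 1000000 in
/-- **Weighted OASIS uniqueness.** If `A ∈ 𝒜` attains the maximal value
`tr(Aᵀ Λ_σ C Λ_w) = Σ_i κ_i^{1/2}` of the weighted-correlation objective,
then `A = Λ_σ⁻¹ Λ_w (Λ_w C Λ_w)^{-1/2}`. -/
theorem stmt_2 {n : ℕ} (hn : 1 ≤ n)
    (S : Matrix (Fin n) (Fin n) ℝ) (hS : S.PosDef)
    (Ls : Matrix (Fin n) (Fin n) ℝ)
    (hLs : Ls = Matrix.diagonal (fun i => Real.sqrt (S i i)))
    (C : Matrix (Fin n) (Fin n) ℝ) (hC : C = Ls⁻¹ * S * Ls⁻¹)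
    (w : Fin n → ℝ) (hw : ∀ i, 0 < w i)
    (Lw : Matrix (Fin n) (Fin n) ℝ) (hLw : Lw = Matrix.diagonal w)
    (hK : (Lw * C * Lw).PosDef)
    (A : Matrix (Fin n) (Fin n) ℝ) (hA : Aᵀ * S * A = 1)
    (hmax : (Aᵀ * Ls * C * Lw).trace = ∑ i, Real.sqrt (hK.1.eigenvalues i)) :
    A = Ls⁻¹ * Lw * (hK.posSemidef.sqrt)⁻¹ := by
  -- basic positivity / invertibility facts
  have hSdiag : ∀ i, 0 < S i i := fun i => by
    exact hS.diag_pos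
  have hLsPD : Ls.PosDef := by
    rw [hLs]; exact Matrix.PosDef.diagonal fun i => Real.sqrt_pos.mpr (hSdiag i)
  have hLwPD : Lw.PosDef := by
    rw [hLw]; exact Matrix.PosDef.diagonal hw
  have hLsdet : IsUnit Ls.det := isUnit_iff_ne_zero.mpr (ne_of_gt hLsPD.det_pos)
  have hLwdet : IsUnit Lw.det := isUnit_iff_ne_zero.mpr (ne_of_gt hLwPD.det_pos)
  have hAdet : IsUnit A.det := by
    have := congrArg Matrix.det hA
    simp only [Matrix.det_mul, Matrix.det_one, Matrix.det_transpose] at this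
    exact isUnit_iff_ne_zero.mpr (fun h0 => by simp [h0] at this)
  -- symmetry facts
  have hSsym : Sᵀ = S := by
    have := hS.1; rwa [Matrix.IsHermitian, Matrix.conjTranspose_eq_transpose_of_trivial] at this
  have hLssym : Lsᵀ = Ls := by rw [hLs, Matrix.diagonal_transpose]
  have hLwsym : Lwᵀ = Lw := by rw [hLw, Matrix.diagonal_transpose]
  set K := Lw * C * Lw with hKdef
  set R := hK.posSemidef.sqrt with hRdef
  have hRR : R * R = K := hK.posSemidef.sqrt_mul_self
  have hRdet : R.det ≠ 0 := by
    intro h0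
    have := hK.det_pos
    rw [← hRR, Matrix.det_mul, h0, mul_zero] at this
    exact lt_irrefl _ this
  have hRsym : Rᵀ = R := by
    have := hK.posSemidef.posSemidef_sqrt.1
    rwa [Matrix.IsHermitian, Matrix.conjTranspose_eq_transpose_of_trivial] at this
  -- A * Aᵀ * S = 1
  have hA' : A * (Aᵀ * S) = 1 := mul_eq_one_comm.mp hA
  have hA'' : A * Aᵀ * S = 1 := by rw [Matrix.mul_assoc]; exact hA'
  -- set N
  set N := Aᵀ * S * Ls⁻¹ * Lw with hNdef
  have hLsLs : Ls * Ls⁻¹ = 1 := Matrix.mul_nonsing_inv Ls hLsdet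
  have hLsLs' : Ls⁻¹ * Ls = 1 := Matrix.nonsing_inv_mul Ls hLsdet
  have hLwLw : Lw * Lw⁻¹ = 1 := Matrix.mul_nonsing_inv Lw hLwdet
  have hNtr : N.trace = ∑ i, Real.sqrt (hK.1.eigenvalues i) := by
    rw [← hmax]
    congr 1
    rw [hC]
    calc Aᵀ * S * Ls⁻¹ * Lw = Aᵀ * (Ls * Ls⁻¹) * S * Ls⁻¹ * Lw := by
          rw [hLsLs, Matrix.mul_one]
      _ = Aᵀ * Ls * (Ls⁻¹ * S * Ls⁻¹) * Lw := by
          simp only [Matrix.mul_assoc]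
  have hNN : Nᵀ * N = K := by
    have hNt : Nᵀ = Lw * (Ls⁻¹ * (S * A)) := by
      rw [hNdef]
      simp only [Matrix.transpose_mul, hLwsym, hSsym, Matrix.transpose_nonsing_inv, hLssym,
        Matrix.transpose_transpose, Matrix.mul_assoc]
    have hcancel : A * (Aᵀ * (S * (Ls⁻¹ * Lw))) = Ls⁻¹ * Lw := by
      calc A * (Aᵀ * (S * (Ls⁻¹ * Lw))) = A * Aᵀ * S * (Ls⁻¹ * Lw) := by
            simp only [Matrix.mul_assoc]
        _ = Ls⁻¹ * Lw := by rw [hA'', Matrix.one_mul]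
    rw [hNt, hNdef, hKdef, hC]
    simp only [Matrix.mul_assoc] at hcancel ⊢
    rw [hcancel]
  -- R facts
  have hRinv : R⁻¹ * R = 1 := Matrix.nonsing_inv_mul R (isUnit_iff_ne_zero.mpr hRdet)
  have hRinv' : R * R⁻¹ = 1 := Matrix.mul_nonsing_inv R (isUnit_iff_ne_zero.mpr hRdet)
  set U := N * R⁻¹ with hUdef
  have hUtU : Uᵀ * U = 1 := by
    have hUt : Uᵀ = R⁻¹ * Nᵀ := by
      rw [hUdef, Matrix.transpose_mul, Matrix.transpose_nonsing_inv, hRsym]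
    calc Uᵀ * U = R⁻¹ * (Nᵀ * N) * R⁻¹ := by rw [hUt, hUdef]; simp only [Matrix.mul_assoc]
      _ = R⁻¹ * (R * R) * R⁻¹ := by rw [hNN, hRR]
      _ = (R⁻¹ * R) * (R * R⁻¹) := by simp only [Matrix.mul_assoc]
      _ = 1 := by rw [hRinv, hRinv', Matrix.one_mul]
  have hUR : U * R = N := by
    rw [hUdef, Matrix.mul_assoc, hRinv, Matrix.mul_one]
  have htrU : (U * R).trace = R.trace := by
    rw [hUR, hNtr, hRdef, aux_trace_sqrt _ hK]
  have hU1 : U = 1 := aux_key R U hK.posSemidef.posSemidef_sqrt hRdet hUtU htrU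
  have hNR : N = R := by rw [← hUR, hU1, Matrix.one_mul]
  have hAinv : A⁻¹ = Aᵀ * S := Matrix.inv_eq_left_inv hA
  have hAinv2 : A⁻¹ = R * Lw⁻¹ * Ls := by
    rw [hAinv]
    have : R * Lw⁻¹ * Ls = Aᵀ * S := by
      rw [← hNR, hNdef, Matrix.mul_assoc (Aᵀ * S * Ls⁻¹) Lw Lw⁻¹, hLwLw, Matrix.mul_one,
        Matrix.mul_assoc (Aᵀ * S) Ls⁻¹ Ls, hLsLs', Matrix.mul_one]
    exact this.symm
  calc A = (A⁻¹)⁻¹ := (Matrix.nonsing_inv_nonsing_inv A hAdet).symm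
    _ = (R * Lw⁻¹ * Ls)⁻¹ := by rw [hAinv2]
    _ = Ls⁻¹ * ((Lw⁻¹)⁻¹ * R⁻¹) := by rw [Matrix.mul_inv_rev, Matrix.mul_inv_rev]
    _ = Ls⁻¹ * Lw * R⁻¹ := by
        rw [Matrix.nonsing_inv_nonsing_inv Lw hLwdet, Matrix.mul_assoc]
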